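/- Let R and S be locally compact, second countable metric spaces with Borel measures r and s respectively, and let π : R → S be a continuous surjective map that is a local homeomorphism and locally takes r to s: for each x ∈ R there are open sets M_x ∋ x and N_{π(x)} ∋ π(x) such that π restricts to a homeomorphism of M_x onto N_{π(x)} carrying the restriction of r to the restriction of s. Suppose there is a natural number d such that every fiber of π has cardinality at most d. Then for every Borel set E ⊆ R, π(E) is a Borel set in S and r(E) ≤ d·s(π(E)). Moreover, if f ≥ 0 is a continuous function on R and t is the Borel measure with dt = f·dr, then t(E) ≤ (sup_E f)·d·s(π(E)) for every Borel set E ⊆ R. -/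

import Mathlib

open MeasureTheory

/-- Let `R, S` be locally compact second countable metric
spaces with Borel measures `r, s`, and `π : R → S` a continuous surjective
local homeomorphism locally carrying `r` to `s`.  If every fiber of `π` has at
most `d` elements, then for every Borel `E ⊆ R`, `π(E)` is Borel and
`r(E) ≤ d · s(π(E))`; moreover for continuous `f ≥ 0` and `dt = f·dr` one has
`t(E) ≤ (sup_E f) · d · s(π(E))`. -/
theorem stmt17 {R S : Type*}
    [MetricSpace R] [LocallyCompactSpace R] [SecondCountableTopology R]
    [MetricSpace S] [LocallyCompactSpace S] [SecondCountableTopology S]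
    [MeasurableSpace R] [BorelSpace R] [MeasurableSpace S] [BorelSpace S]
    (r : Measure R) (s : Measure S)
    (π : R → S) (hcont : Continuous π) (hsurj : Function.Surjective π)
    (hloc : ∀ x : R, ∃ (M : Set R) (N : Set S), IsOpen M ∧ IsOpen N ∧ x ∈ M ∧
      Set.BijOn π M N ∧ (∀ V ⊆ M, IsOpen V → IsOpen (π '' V)) ∧
      (∀ E ⊆ M, MeasurableSet E → r E = s (π '' E)))
    (d : ℕ)
    (hfib : ∀ y : S, ∃ Fs : Finset R, (π ⁻¹' {y} : Set R) ⊆ ↑Fs ∧ Fs.card ≤ d) :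
    (∀ E : Set R, MeasurableSet E →
      MeasurableSet (π '' E) ∧ r E ≤ (d : ENNReal) * s (π '' E)) ∧
    (∀ f : R → ℝ, Continuous f → (∀ x, 0 ≤ f x) →
      ∀ E : Set R, MeasurableSet E →
        (r.withDensity fun x => ENNReal.ofReal (f x)) E ≤
          (⨆ x ∈ E, ENNReal.ofReal (f x)) * (d : ENNReal) * s (π '' E)) := by
  classical
  choose M N hMopen hNopen hmem hbij hopenmap hmeasloc using hloc
  -- image of a measurable subset of a chart is measurable
  have himg : ∀ (x : R) (K : Set R), K ⊆ M x → MeasurableSet K →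
      MeasurableSet (π '' K) := by
    intro x K hK hKm
    set e : ↥(M x) → S := fun z => π z with he
    have hconte : Continuous e := hcont.comp continuous_subtype_val
    have hinje : Function.Injective e := by
      intro a b hab
      exact Subtype.ext ((hbij x).injOn a.2 b.2 hab)
    have hopene : IsOpenMap e := by
      intro U hU
      have h1 : e '' U = π '' (Subtype.val '' U) := by
        simp [he, Set.image_image]
      rw [h1]
      exact hopenmap x _ (by rintro _ ⟨z, _, rfl⟩; exact z.2)
        ((hMopen x).isOpenMap_subtype_val U hU)
    have hemb : Topology.IsOpenEmbedding e :=
      Topology.IsOpenEmbedding.of_continuous_injective_isOpenMap hconte hinje hopene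
    have hme : MeasurableEmbedding e := hemb.measurableEmbedding
    have hKeq : π '' K = e '' (Subtype.val ⁻¹' K) := by
      ext y
      constructor
      · rintro ⟨z, hz, rfl⟩
        exact ⟨⟨z, hK hz⟩, hz, rfl⟩
      · rintro ⟨z, hz, rfl⟩
        exact ⟨z, hz, rfl⟩
    rw [hKeq]
    exact hme.measurableSet_image' (hKm.preimage measurable_subtype_coe)
  have main : ∀ E : Set R, MeasurableSet E →
      MeasurableSet (π '' E) ∧ r E ≤ (d : ENNReal) * s (π '' E) := by
    intro E hE
    by_cases hR : Nonempty R
    · -- countable cover by charts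
      obtain ⟨t, htc, htU⟩ := TopologicalSpace.countable_cover_nhds
        (fun x => (hMopen x).mem_nhds (hmem x))
      have htne : t.Nonempty := by
        rcases Set.eq_empty_or_nonempty t with h | h
        · exfalso
          obtain ⟨x⟩ := hR
          have := htU ▸ Set.mem_univ x
          rw [h] at this
          simp at this
        · exact h
      obtain ⟨u, hu⟩ := htc.exists_eq_range htne
      set A : ℕ → Set R := fun n => M (u n) with hA
      have hAcover : (⋃ n, A n) = Set.univ := by
        rw [← htU, hu]
        ext z; simp [hA]
      set B : ℕ → Set R := disjointed A with hB
      have hBm : ∀ n, MeasurableSet (B n) :=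
        MeasurableSet.disjointed (fun n => (hMopen (u n)).measurableSet)
      have hBsub : ∀ n, B n ⊆ A n := fun n => disjointed_subset A n
      have hBU : (⋃ n, B n) = Set.univ := by rw [hB, iUnion_disjointed, hAcover]
      have hBdisj : Pairwise (Function.onFun Disjoint B) := disjoint_disjointed A
      set F : ℕ → Set R := fun n => E ∩ B n with hF
      have hFm : ∀ n, MeasurableSet (F n) := fun n => hE.inter (hBm n)
      have hFsub : ∀ n, F n ⊆ M (u n) := fun n =>
        (Set.inter_subset_right).trans (hBsub n)
      have hFU : (⋃ n, F n) = E := by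
        rw [hF]; rw [← Set.inter_iUnion, hBU, Set.inter_univ]
      have hFdisj : Pairwise (Function.onFun Disjoint F) := fun i j hij =>
        (hBdisj hij).mono Set.inter_subset_right Set.inter_subset_right
      set A' : ℕ → Set S := fun n => π '' (F n) with hA'
      have hA'm : ∀ n, MeasurableSet (A' n) := fun n =>
        himg (u n) (F n) (hFsub n) (hFm n)
      have hEimg : π '' E = ⋃ n, A' n := by
        rw [← hFU, Set.image_iUnion]
      constructor
      · rw [hEimg]; exact MeasurableSet.iUnion hA'm
      · -- measure inequality
        have hrE : r E = ∑' n, r (F n) := by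
          rw [← hFU, measure_iUnion hFdisj hFm]
        have hterm : ∀ n, r (F n) = s (A' n) := fun n =>
          hmeasloc (u n) (F n) (hFsub n) (hFm n)
        -- key: ∑' s (A' n) ≤ d * s (⋃ A' n)
        have hkey : (∑' n, s (A' n)) ≤ (d : ENNReal) * s (⋃ n, A' n) := by
          have h1 : (∑' n, s (A' n)) =
              ∫⁻ y, ∑' n, (A' n).indicator (1 : S → ENNReal) y ∂s := by
            rw [lintegral_tsum (fun n => ((measurable_one.indicator (hA'm n))).aemeasurable)]
            simp_rw [lintegral_indicator_one (hA'm _)]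
          rw [h1]
          have h2 : ∀ y, (∑' n, (A' n).indicator (1 : S → ENNReal) y) ≤
              (d : ENNReal) * (⋃ n, A' n).indicator (1 : S → ENNReal) y := by
            intro y
            by_cases hy : y ∈ ⋃ n, A' n
            · simp only [Set.indicator_of_mem hy, Pi.one_apply, mul_one]
              -- the set of indices hitting y has at most d elements
              obtain ⟨Fs, hFs, hFc⟩ := hfib y
              set T : Set ℕ := {n | y ∈ A' n} with hT
              have hex : ∀ n, ∃ x : R, n ∈ T → x ∈ F n ∧ π x = y := by
                intro n
                by_cases hn : n ∈ T
                · obtain ⟨x, hx1, hx2⟩ := hn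
                  exact ⟨x, fun _ => ⟨hx1, hx2⟩⟩
                · obtain ⟨x⟩ := hR
                  exact ⟨x, fun h => absurd h hn⟩
              choose g hg using hex
              have hginj : Set.InjOn g T := by
                intro i hi j hj hgij
                by_contra hij
                have h1 := (hg i hi).1.2
                have h2 := (hg j hj).1.2
                rw [hgij] at h1
                exact Set.disjoint_left.mp (hBdisj hij) h1 h2
              have hgmem : ∀ n ∈ T, g n ∈ Fs := by
                intro n hn
                exact hFs (by simp [Set.mem_preimage, (hg n hn).2])
              have hTfin : T.Finite :=
                Set.Finite.of_finite_image ((Fs.finite_toSet).subset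
                  (by rintro _ ⟨n, hn, rfl⟩; exact hgmem n hn)) hginj
              have hcard : hTfin.toFinset.card ≤ d := by
                refine le_trans ?_ hFc
                apply Finset.card_le_card_of_injOn g
                · intro a ha
                  exact hgmem a (hTfin.mem_toFinset.mp ha)
                · intro a ha b hb hab
                  exact hginj (hTfin.mem_toFinset.mp ha) (hTfin.mem_toFinset.mp hb) hab
              calc (∑' n, (A' n).indicator (1 : S → ENNReal) y)
                  = ∑ n ∈ hTfin.toFinset, (A' n).indicator (1 : S → ENNReal) y := by
                    apply tsum_eq_sum
                    intro n hn
                    exact Set.indicator_of_notMem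
                      (fun (h : y ∈ A' n) => hn (hTfin.mem_toFinset.mpr h)) _
                _ ≤ ∑ _n ∈ hTfin.toFinset, (1 : ENNReal) := by
                    apply Finset.sum_le_sum
                    intro n _
                    exact le_trans (Set.indicator_le_self _ _ y) (by simp)
                _ = (hTfin.toFinset.card : ENNReal) := by simp
                _ ≤ (d : ENNReal) := by exact_mod_cast hcard
            · rw [Set.indicator_of_notMem hy, mul_zero]
              have : ∀ n, (A' n).indicator (1 : S → ENNReal) y = 0 := by
                intro n
                exact Set.indicator_of_notMem (fun h => hy (Set.mem_iUnion.mpr ⟨n, h⟩)) _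
              simp [this]
          calc (∫⁻ y, ∑' n, (A' n).indicator (1 : S → ENNReal) y ∂s)
              ≤ ∫⁻ y, (d : ENNReal) * (⋃ n, A' n).indicator (1 : S → ENNReal) y ∂s :=
                lintegral_mono h2
            _ = (d : ENNReal) * s (⋃ n, A' n) := by
                rw [lintegral_const_mul _ (measurable_one.indicator (MeasurableSet.iUnion hA'm)),
                  lintegral_indicator_one (MeasurableSet.iUnion hA'm)]
        calc r E = ∑' n, r (F n) := hrE
          _ = ∑' n, s (A' n) := by simp_rw [hterm]
          _ ≤ (d : ENNReal) * s (⋃ n, A' n) := hkey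
          _ = (d : ENNReal) * s (π '' E) := by rw [hEimg]
    · -- R empty
      have : IsEmpty R := not_nonempty_iff.mp hR
      have hEe : E = ∅ := Set.eq_empty_of_isEmpty E
      subst hEe
      simp
  refine ⟨main, ?_⟩
  intro f hf hf0 E hE
  have h1 : (r.withDensity fun x => ENNReal.ofReal (f x)) E
      = ∫⁻ x in E, ENNReal.ofReal (f x) ∂r := withDensity_apply _ hE
  rw [h1]
  calc (∫⁻ x in E, ENNReal.ofReal (f x) ∂r)
      ≤ ∫⁻ _x in E, (⨆ x ∈ E, ENNReal.ofReal (f x)) ∂r := by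
        apply setLIntegral_mono' hE
        intro x hx
        exact le_biSup (fun x => ENNReal.ofReal (f x)) hx
    _ = (⨆ x ∈ E, ENNReal.ofReal (f x)) * r E := by rw [setLIntegral_const]
    _ ≤ (⨆ x ∈ E, ENNReal.ofReal (f x)) * ((d : ENNReal) * s (π '' E)) :=
        mul_le_mul_right (main E hE).2 _
    _ = (⨆ x ∈ E, ENNReal.ofReal (f x)) * (d : ENNReal) * s (π '' E) := by
        rw [mul_assoc]
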